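/- Let N ≥ 3 be an integer; indices are elements of ℤ/Nℤ. For a, b ∈ ℤ/Nℤ let d(a,b) ∈ {0, …, N−1} be the representative of b − a, and define the directed cyclic product ∏→_{k=a}^{b} v_k := ∏_{l=0}^{d(a,b)} v_{a+l} and the directed cyclic sum Σ→_{k=a}^{b} v_k := Σ_{l=0}^{d(a,b)} v_{a+l} (taken over the d(a,b)+1 indices a, a+1, …, b along the positive orientation). Let u : ℤ/Nℤ → ℝ with u_k > 0 for all k and Π := ∏_{k ∈ ℤ/Nℤ} u_k ≠ 1, and let R be the N×N matrix with R(i,i) = u_i² + 1, R(i,i+1) = −u_i, R(i,i−1) = −u_{i−1}, and R(i,j) = 0 for all other pairs. Then R is invertible and its inverse is given by: (a) for j ∉ {i−1, i, i+1}: R^{−1}(i,j) = [ ∏→_{k=i}^{j−1} u_k · ( 1 + Σ→_{k=j+1}^{i−1} ∏→_{l=k}^{i−1} u_l² ) + ∏→_{k=j}^{i−1} u_k · ( 1 + Σ→_{k=i+1}^{j−1} ∏→_{l=k}^{j−1} u_l² ) ] / (Π − 1)²; (b) R^{−1}(i,i+1) = [ u_i · ( 1 + Σ→_{k=i+2}^{i−1}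 ∏→_{l=k}^{i−1} u_l² ) + ∏→_{k=i+1}^{i−1} u_k ] / (Π − 1)²; (c) R^{−1}(i,i−1) = [ u_{i−1} · ( 1 + Σ→_{k=i+1}^{i−2} ∏→_{l=k}^{i−2} u_l² ) + ∏→_{k=i}^{i−2} u_k ] / (Π − 1)²; (d) R^{−1}(i,i) = ( 1 + Σ→_{k=i+1}^{i−1} ∏→_{l=k}^{i−1} u_l² ) / (Π − 1)². -/
import Mathlib


open Matrix

/-- Directed cyclic product `∏→_{k=a}^{b} v_k` along the positive orientation of `ℤ/Nℤ`. -/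
noncomputable def cycProd (N : ℕ) [NeZero N] (v : ZMod N → ℝ) (a b : ZMod N) : ℝ :=
  ∏ l ∈ Finset.range ((b - a).val + 1), v (a + l)

/-- Directed cyclic sum `Σ→_{k=a}^{b} f_k` along the positive orientation of `ℤ/Nℤ`. -/
noncomputable def cycSum (N : ℕ) [NeZero N] (f : ZMod N → ℝ) (a b : ZMod N) : ℝ :=
  ∑ l ∈ Finset.range ((b - a).val + 1), f (a + l)

/-- The conjugated discrete Schrödinger operator on the circle with `N` vertices:
`R(i,i) = u_i² + 1`, `R(i,i+1) = -u_i`, `R(i,i-1) = -u_{i-1}`, `R(i,j) = 0` otherwise. -/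
noncomputable def Rcirc (N : ℕ) [NeZero N] (u : ZMod N → ℝ) :
    Matrix (ZMod N) (ZMod N) ℝ :=
  Matrix.of fun i j => if j = i then u i ^ 2 + 1
    else if j = i + 1 then -u i
    else if j = i - 1 then -u (i - 1) else 0

set_option linter.unusedSectionVars false
set_option linter.unusedVariables false

namespace RcircAux

variable {N : ℕ} [NeZero N]

/-- partial products along the cycle, ℕ-indexed length -/
noncomputable def wfun (u : ZMod N → ℝ) (s : ZMod N) (t : ℕ) : ℝ :=
  ∏ l ∈ Finset.range t, u (s + l)

lemma wfun_zero (u : ZMod N → ℝ) (s : ZMod N) : wfun u s 0 = 1 := by simp [wfun]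

lemma wfun_one (u : ZMod N → ℝ) (s : ZMod N) : wfun u s 1 = u s := by simp [wfun]

lemma wfun_add (u : ZMod N → ℝ) (s : ZMod N) (a b : ℕ) :
    wfun u s (a + b) = wfun u s a * wfun u (s + a) b := by
  unfold wfun
  rw [Finset.prod_range_add]
  congr 1
  refine Finset.prod_congr rfl fun x _ => ?_
  congr 1
  push_cast
  ring

lemma wfun_sq (u : ZMod N → ℝ) (s : ZMod N) (t : ℕ) :
    wfun (fun l => u l ^ 2) s t = wfun u s t ^ 2 := by
  unfold wfun; rw [Finset.prod_pow]

lemma natCast_val (a : ZMod N) : ((a.val : ℕ) : ZMod N) = a :=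
  ZMod.natCast_rightInverse a

lemma val_neg_natCast (t : ℕ) (h1 : 0 < t) (h2 : t ≤ N) :
    (-(t : ZMod N)).val = N - t := by
  rcases eq_or_lt_of_le h2 with rfl | h
  · simp [ZMod.natCast_self]
  · rw [ZMod.neg_val, if_neg, ZMod.val_cast_of_lt h]
    intro h0
    have := ZMod.val_cast_of_lt (n := N) h
    rw [h0, ZMod.val_zero] at this
    omega

lemma wfun_univ (u : ZMod N → ℝ) (s : ZMod N) : wfun u s N = ∏ k, u k := by
  unfold wfun
  refine Finset.prod_bij (fun l _ => (s + l : ZMod N)) (fun _ _ => Finset.mem_univ _)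
    ?_ ?_ (fun _ _ => rfl)
  · intro a ha b hb hab
    have : ((a : ZMod N)) = b := by
      have := add_left_cancel hab
      exact this
    have ha' : a < N := Finset.mem_range.mp ha
    have hb' : b < N := Finset.mem_range.mp hb
    have := congrArg ZMod.val this
    rwa [ZMod.val_cast_of_lt ha', ZMod.val_cast_of_lt hb'] at this
  · intro k _
    refine ⟨(k - s).val, Finset.mem_range.mpr (ZMod.val_lt _), ?_⟩
    show s + ((k - s).val : ZMod N) = k
    rw [natCast_val]
    ring


/-- weighted cyclic shift matrix -/
noncomputable def Bmat (u : ZMod N → ℝ) : Matrix (ZMod N) (ZMod N) ℝ :=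
  Matrix.of fun i j => if j = i + 1 then u i else 0

lemma Bmat_pow (u : ZMod N → ℝ) (m : ℕ) :
    Bmat u ^ m = Matrix.of (fun i j : ZMod N => if j = i + (m : ZMod N) then wfun u i m else 0) := by
  induction m with
  | zero =>
    ext i j
    simp [Matrix.one_apply, wfun_zero, eq_comm]
  | succ m ih =>
    rw [pow_succ, ih]
    ext i j
    simp only [Matrix.mul_apply, Matrix.of_apply, Bmat, ite_mul, zero_mul, mul_ite, mul_zero]
    have swap : ∀ x : ZMod N,
        (if j = x + 1 then if x = i + (m : ZMod N) then wfun u i m * u x else 0 else 0)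
        = (if x = i + (m : ZMod N) then if j = x + 1 then wfun u i m * u x else 0 else 0) := by
      intro x
      by_cases h1 : j = x + 1 <;> by_cases h2 : x = i + (m : ZMod N) <;> simp [h1, h2]
    rw [Finset.sum_congr rfl (fun x _ => swap x),
      Finset.sum_ite_eq' Finset.univ (i + (m : ZMod N))
        (fun k => if j = k + 1 then wfun u i m * u k else 0)]
    simp only [Finset.mem_univ, if_true]
    have hc : (j = i + ((m + 1 : ℕ) : ZMod N)) ↔ (j = i + (m : ZMod N) + 1) := by
      constructor <;> intro h <;> (rw [h]; push_cast; ring)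
    by_cases h : j = i + (m : ZMod N) + 1
    · rw [if_pos h, if_pos (hc.mpr h)]
      unfold wfun
      rw [Finset.prod_range_succ]
    · rw [if_neg h, if_neg (fun hh => h (hc.mp hh))]

lemma Bmat_pow_univ (u : ZMod N → ℝ) :
    Bmat u ^ N = (∏ k, u k) • (1 : Matrix (ZMod N) (ZMod N) ℝ) := by
  rw [Bmat_pow]
  ext i j
  simp [Matrix.smul_apply, Matrix.one_apply, ZMod.natCast_self, wfun_univ, eq_comm]

lemma BBt (u : ZMod N → ℝ) :
    Bmat u * (Bmat u)ᵀ = Matrix.of (fun i j : ZMod N => if j = i then u i ^ 2 else 0) := by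
  ext i j
  simp only [Matrix.mul_apply, Matrix.transpose_apply, Bmat, Matrix.of_apply, ite_mul, zero_mul,
    mul_ite, mul_zero]
  have swap : ∀ x : ZMod N,
      (if x = j + 1 then if x = i + 1 then u i * u j else 0 else 0)
      = (if x = i + 1 then if x = j + 1 then u i * u j else 0 else 0) := by
    intro x
    by_cases h1 : x = j + 1 <;> by_cases h2 : x = i + 1 <;> simp [h1, h2]
  rw [Finset.sum_congr rfl (fun x _ => swap x),
    Finset.sum_ite_eq' Finset.univ (i + 1) (fun k => if k = j + 1 then u i * u j else 0)]
  simp only [Finset.mem_univ, if_true]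
  by_cases h : j = i
  · subst h
    simp [pow_two]
  · rw [if_neg, if_neg h]
    intro hh
    exact h (add_right_cancel hh).symm

lemma two_ne_zero' (hN : 3 ≤ N) : ((2 : ℕ) : ZMod N) ≠ 0 := by
  intro h
  rw [ZMod.natCast_eq_zero_iff] at h
  exact absurd (Nat.le_of_dvd (by norm_num) h) (by omega)

lemma one_ne_zero'' (hN : 3 ≤ N) : (1 : ZMod N) ≠ 0 := by
  haveI : Fact (1 < N) := ⟨by omega⟩
  exact one_ne_zero

lemma Rfact (hN : 3 ≤ N) (u : ZMod N → ℝ) :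
    Rcirc N u = (1 - Bmat u) * (1 - (Bmat u)ᵀ) := by
  have expand : (1 - Bmat u) * (1 - (Bmat u)ᵀ)
      = 1 - Bmat u - (Bmat u)ᵀ + Bmat u * (Bmat u)ᵀ := by noncomm_ring
  rw [expand, BBt]
  have e1 : (1 : ZMod N) ≠ 0 := one_ne_zero'' hN
  have e2 : ((2 : ℕ) : ZMod N) ≠ 0 := two_ne_zero' hN
  ext i j
  simp only [Rcirc, Matrix.add_apply, Matrix.sub_apply, Matrix.one_apply,
    Matrix.transpose_apply, Bmat, Matrix.of_apply]
  by_cases hji : j = i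
  · subst hji
    have c1 : ¬ (j = j + 1) := fun h => e1 (by linear_combination -h)
    have c2 : ¬ (j = j - 1) := fun h => e1 (by linear_combination h)
    simp only [eq_self_iff_true, if_true, if_neg c1, if_neg c2]
    ring
  · by_cases hj1 : j = i + 1
    · subst hj1
      have d1 : ¬ (i + 1 = i) := fun h => e1 (by linear_combination h)
      have d2 : ¬ (i = i + 1) := fun h => e1 (by linear_combination -h)
      have d3 : ¬ (i = i + 1 + 1) := fun h => e2 (by push_cast; linear_combination -h)
      have d4 : ¬ (i + 1 = i - 1) := fun h => e2 (by push_cast; linear_combination h)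
      simp only [eq_self_iff_true, if_true, if_neg d1, if_neg d2, if_neg d3, if_neg d4]
      ring
    · by_cases hjm : j = i - 1
      · rw [hjm] at hj1 ⊢
        have f1 : ¬ (i - 1 = i) := fun h => e1 (by linear_combination -h)
        have f2 : ¬ (i - 1 = i + 1) := fun h => e2 (by push_cast; linear_combination -h)
        have f3 : ¬ (i = i - 1) := fun h => e1 (by linear_combination h)
        have f4 : i = i - 1 + 1 := by ring
        simp only [eq_self_iff_true, if_true, if_pos f4, if_neg f1, if_neg hj1, if_neg f3]
        ring
      · have c1 : ¬ (i = j + 1) := fun h => hjm (by rw [h]; ring)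
        have c3 : ¬ (i = j) := fun h => hji h.symm
        simp only [if_neg hji, if_neg hj1, if_neg hjm, if_neg c1, if_neg c3]
        ring


noncomputable def Smat1 (u : ZMod N → ℝ) : Matrix (ZMod N) (ZMod N) ℝ :=
  ∑ m ∈ Finset.range N, ((Bmat u)ᵀ) ^ m

noncomputable def Smat2 (u : ZMod N → ℝ) : Matrix (ZMod N) (ZMod N) ℝ :=
  ∑ m ∈ Finset.range N, (Bmat u) ^ m

lemma geom2 (u : ZMod N → ℝ) :
    (1 - Bmat u) * Smat2 u = (1 - ∏ k, u k) • 1 := by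
  have h : (1 - Bmat u) * Smat2 u = -((Bmat u - 1) * Smat2 u) := by noncomm_ring
  rw [h, Smat2, mul_geom_sum, Bmat_pow_univ]
  rw [sub_smul, one_smul]
  abel

lemma Bt_pow_univ (u : ZMod N → ℝ) :
    ((Bmat u)ᵀ) ^ N = (∏ k, u k) • (1 : Matrix (ZMod N) (ZMod N) ℝ) := by
  rw [← Matrix.transpose_pow, Bmat_pow_univ, Matrix.transpose_smul, Matrix.transpose_one]

lemma geom1 (u : ZMod N → ℝ) :
    (1 - (Bmat u)ᵀ) * Smat1 u = (1 - ∏ k, u k) • 1 := by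
  have h : (1 - (Bmat u)ᵀ) * Smat1 u = -(((Bmat u)ᵀ - 1) * Smat1 u) := by noncomm_ring
  rw [h, Smat1, mul_geom_sum, Bt_pow_univ]
  rw [sub_smul, one_smul]
  abel

lemma R_mul_SS (hN : 3 ≤ N) (u : ZMod N → ℝ) :
    Rcirc N u * (Smat1 u * Smat2 u) = (((∏ k, u k) - 1) ^ 2) • 1 := by
  rw [Rfact hN]
  calc (1 - Bmat u) * (1 - (Bmat u)ᵀ) * (Smat1 u * Smat2 u)
      = (1 - Bmat u) * (((1 - (Bmat u)ᵀ) * Smat1 u) * Smat2 u) := by noncomm_ring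
    _ = (1 - Bmat u) * (((1 - ∏ k, u k) • 1) * Smat2 u) := by rw [geom1]
    _ = (1 - ∏ k, u k) • ((1 - Bmat u) * Smat2 u) := by
        rw [Matrix.smul_mul, Matrix.one_mul, Matrix.mul_smul]
    _ = (1 - ∏ k, u k) • ((1 - ∏ k, u k) • (1 : Matrix (ZMod N) (ZMod N) ℝ)) := by rw [geom2]
    _ = (((∏ k, u k) - 1) ^ 2) • 1 := by rw [smul_smul]; ring_nf

lemma rightInv (hN : 3 ≤ N) (u : ZMod N → ℝ) (hprod : (∏ k, u k) ≠ 1) :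
    Rcirc N u * (((((∏ k, u k) - 1) ^ 2)⁻¹) • (Smat1 u * Smat2 u)) = 1 := by
  rw [Matrix.mul_smul, R_mul_SS hN, smul_smul, inv_mul_cancel₀, one_smul]
  exact pow_ne_zero _ (sub_ne_zero.mpr hprod)


lemma ZMod_mod_cast (a : ℕ) : ((a % N : ℕ) : ZMod N) = (a : ZMod N) := by
  conv_rhs => rw [← Nat.mod_add_div a N]
  push_cast [ZMod.natCast_self]
  ring

lemma SS_entry (u : ZMod N → ℝ) (i j : ZMod N) :
    (Smat1 u * Smat2 u) i j
      = ∑ m ∈ Finset.range N,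
          wfun u (i - (m : ZMod N)) m * wfun u (i - (m : ZMod N)) ((m + (j - i).val) % N) := by
  unfold Smat1 Smat2
  rw [Finset.sum_mul, Matrix.sum_apply]
  refine Finset.sum_congr rfl fun m hm => ?_
  rw [Finset.mul_sum, Matrix.sum_apply]
  set e : ℕ := (m + (j - i).val) % N with he
  have heN : e < N := Nat.mod_lt _ (Nat.pos_of_ne_zero (NeZero.ne N))
  have hecast : ((e : ℕ) : ZMod N) = (m : ZMod N) + (j - i) := by
    rw [he, ZMod_mod_cast]
    push_cast [natCast_val]
    ring
  have hterm : ∀ n : ℕ, ((Bmat u)ᵀ ^ m * Bmat u ^ n) i j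
      = if j = (i - (m : ZMod N)) + (n : ZMod N)
          then wfun u (i - (m : ZMod N)) m * wfun u (i - (m : ZMod N)) n else 0 := by
    intro n
    rw [← Matrix.transpose_pow, Bmat_pow, Bmat_pow]
    simp only [Matrix.mul_apply, Matrix.transpose_apply, Matrix.of_apply, ite_mul, zero_mul,
      mul_ite, mul_zero]
    have swap : ∀ k : ZMod N,
        (if j = k + (n : ZMod N) then if i = k + (m : ZMod N) then wfun u k m * wfun u k n else 0 else 0)
        = (if k = i - (m : ZMod N) then
            if j = k + (n : ZMod N) then wfun u k m * wfun u k n else 0 else 0) := by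
      intro k
      have hiff : (i = k + (m : ZMod N)) ↔ (k = i - (m : ZMod N)) := by
        constructor
        · intro h; rw [h]; ring
        · intro h; rw [h]; ring
      by_cases h1 : j = k + (n : ZMod N) <;> by_cases h2 : k = i - (m : ZMod N)
      · rw [if_pos h1, if_pos h2, if_pos (hiff.mpr h2), if_pos h1]
      · rw [if_pos h1, if_neg h2, if_neg (fun hh => h2 (hiff.mp hh))]
      · rw [if_neg h1, if_pos h2, if_neg h1]
      · rw [if_neg h1, if_neg h2]
    rw [Finset.sum_congr rfl (fun k _ => swap k),
      Finset.sum_ite_eq' Finset.univ (i - (m : ZMod N))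
        (fun k => if j = k + (n : ZMod N) then wfun u k m * wfun u k n else 0)]
    simp only [Finset.mem_univ, if_true]
  have hcond : ∀ n ∈ Finset.range N,
      (if j = (i - (m : ZMod N)) + (n : ZMod N)
        then wfun u (i - (m : ZMod N)) m * wfun u (i - (m : ZMod N)) n else 0)
      = (if n = e then wfun u (i - (m : ZMod N)) m * wfun u (i - (m : ZMod N)) n else 0) := by
    intro n hn
    have hn' : n < N := Finset.mem_range.mp hn
    have hiff : (j = (i - (m : ZMod N)) + (n : ZMod N)) ↔ n = e := by
      constructor
      · intro h
        have hcast : ((n : ℕ) : ZMod N) = ((e : ℕ) : ZMod N) := by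
          rw [hecast]
          have : ((n : ℕ) : ZMod N) = j - (i - (m : ZMod N)) := by rw [h]; ring
          rw [this]; ring
        have := congrArg ZMod.val hcast
        rwa [ZMod.val_cast_of_lt hn', ZMod.val_cast_of_lt heN] at this
      · intro h
        subst h
        rw [hecast]
        ring
    by_cases h : n = e
    · rw [if_pos (hiff.mpr h), if_pos h]
    · rw [if_neg (fun hh => h (hiff.mp hh)), if_neg h]
  calc ∑ n ∈ Finset.range N, ((Bmat u)ᵀ ^ m * Bmat u ^ n) i j
      = ∑ n ∈ Finset.range N,
          (if n = e then wfun u (i - (m : ZMod N)) m * wfun u (i - (m : ZMod N)) n else 0) := by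
        refine Finset.sum_congr rfl fun n hn => ?_
        rw [hterm n]; exact hcond n hn
    _ = wfun u (i - (m : ZMod N)) m * wfun u (i - (m : ZMod N)) e := by
        rw [Finset.sum_ite_eq' (Finset.range N) e
          (fun n => wfun u (i - (m : ZMod N)) m * wfun u (i - (m : ZMod N)) n),
          if_pos (Finset.mem_range.mpr heN)]


lemma SS_entry_split (u : ZMod N → ℝ) (i : ZMod N) (d : ℕ) (hd : d < N) :
    (Smat1 u * Smat2 u) i (i + (d : ZMod N))
      = wfun u i d * (∑ m ∈ Finset.range (N - d), wfun u (i - (m : ZMod N)) m ^ 2)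
        + wfun u (i + (d : ZMod N)) (N - d) *
            (∑ n ∈ Finset.range d, wfun u (i + (d : ZMod N) - (n : ZMod N)) n ^ 2) := by
  have hval : ((i + (d : ZMod N)) - i).val = d := by
    rw [show (i + (d : ZMod N)) - i = ((d : ℕ) : ZMod N) by ring, ZMod.val_cast_of_lt hd]
  rw [SS_entry, hval]
  set F : ℕ → ℝ := fun m =>
    wfun u (i - (m : ZMod N)) m * wfun u (i - (m : ZMod N)) ((m + d) % N) with hF
  have hsplit : ∑ m ∈ Finset.range N, F m
      = ∑ m ∈ Finset.range (N - d), F m + ∑ t ∈ Finset.range d, F (N - d + t) := by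
    rw [Finset.range_eq_Ico,
      ← Finset.sum_Ico_consecutive F (Nat.zero_le (N - d)) (Nat.sub_le N d),
      Finset.sum_Ico_eq_sum_range F (N - d) N, Nat.sub_sub_self (Nat.le_of_lt hd),
      ← Finset.range_eq_Ico]
  rw [hsplit]
  have part1 : ∀ m ∈ Finset.range (N - d),
      F m = wfun u i d * wfun u (i - (m : ZMod N)) m ^ 2 := by
    intro m hm
    have hm' : m < N - d := Finset.mem_range.mp hm
    have hmod : (m + d) % N = m + d := Nat.mod_eq_of_lt (by omega)
    rw [hF]
    simp only
    rw [hmod, wfun_add u (i - (m : ZMod N)) m d,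
      show i - (m : ZMod N) + (m : ZMod N) = i by ring]
    ring
  have part2 : ∀ t ∈ Finset.range d,
      F (N - d + t) = wfun u (i + (d : ZMod N)) (N - d) *
        wfun u (i + (d : ZMod N) - (t : ZMod N)) t ^ 2 := by
    intro t ht
    have ht' : t < d := Finset.mem_range.mp ht
    have h1 : (N - d + t + d) % N = t := by
      rw [show N - d + t + d = N + t by omega, Nat.add_mod_left,
        Nat.mod_eq_of_lt (by omega)]
    have h2 : ((N - d + t : ℕ) : ZMod N) = (t : ZMod N) - (d : ZMod N) := by
      push_cast [Nat.cast_sub (Nat.le_of_lt hd)]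
      rw [ZMod.natCast_self]
      ring
    have hs : i - ((N - d + t : ℕ) : ZMod N) = i + (d : ZMod N) - (t : ZMod N) := by
      rw [h2]; ring
    rw [hF]
    simp only
    rw [h1, hs, show N - d + t = t + (N - d) by omega, wfun_add,
      show i + (d : ZMod N) - (t : ZMod N) + (t : ZMod N) = i + (d : ZMod N) by ring]
    ring
  rw [Finset.sum_congr rfl part1, Finset.sum_congr rfl part2, ← Finset.mul_sum, ← Finset.mul_sum]

lemma cycProd_eq (v : ZMod N → ℝ) (a b : ZMod N) :
    cycProd N v a b = wfun v a ((b - a).val + 1) := rfl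

lemma keySum (u : ZMod N → ℝ) (j : ZMod N) (c : ℕ) (hc : 1 ≤ c) (hcN : c ≤ N - 1) :
    1 + cycSum N (fun k => cycProd N (fun l => u l ^ 2) k (j - 1)) (j - (c : ZMod N)) (j - 1)
      = ∑ n ∈ Finset.range (c + 1), wfun u (j - (n : ZMod N)) n ^ 2 := by
  have hNpos : 0 < N := Nat.pos_of_ne_zero (NeZero.ne N)
  have hcN' : c < N := by omega
  have h1 : (j - 1) - (j - (c : ZMod N)) = ((c - 1 : ℕ) : ZMod N) := by
    push_cast [Nat.cast_sub hc]
    ring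
  have hval : ((j - 1) - (j - (c : ZMod N))).val = c - 1 := by
    rw [h1, ZMod.val_cast_of_lt (by omega)]
  unfold cycSum
  rw [hval, show c - 1 + 1 = c by omega]
  have hterm : ∀ l ∈ Finset.range c,
      cycProd N (fun x => u x ^ 2) (j - (c : ZMod N) + (l : ZMod N)) (j - 1)
        = wfun u (j - ((c - l : ℕ) : ZMod N)) (c - l) ^ 2 := by
    intro l hl
    have hl' : l < c := Finset.mem_range.mp hl
    have hk : j - (c : ZMod N) + (l : ZMod N) = j - ((c - l : ℕ) : ZMod N) := by
      push_cast [Nat.cast_sub (Nat.le_of_lt hl')]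
      ring
    have htarget : (j - 1) - (j - (c : ZMod N) + (l : ZMod N)) = ((c - l - 1 : ℕ) : ZMod N) := by
      push_cast [Nat.cast_sub (show 1 ≤ c - l by omega), Nat.cast_sub (Nat.le_of_lt hl')]
      ring
    rw [cycProd_eq, htarget, ZMod.val_cast_of_lt (by omega), hk,
      show c - l - 1 + 1 = c - l by omega, wfun_sq]
  rw [Finset.sum_congr rfl hterm]
  have hreflect : ∑ l ∈ Finset.range c, wfun u (j - ((c - l : ℕ) : ZMod N)) (c - l) ^ 2
      = ∑ l ∈ Finset.range c, wfun u (j - ((l + 1 : ℕ) : ZMod N)) (l + 1) ^ 2 := by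
    rw [← Finset.sum_range_reflect (fun l => wfun u (j - ((l + 1 : ℕ) : ZMod N)) (l + 1) ^ 2) c]
    refine Finset.sum_congr rfl fun l hl => ?_
    have hl' : l < c := Finset.mem_range.mp hl
    rw [show c - 1 - l + 1 = c - l by omega]
  rw [hreflect]
  have := Finset.sum_range_succ' (fun n => wfun u (j - (n : ZMod N)) n ^ 2) c
  rw [this]
  simp [wfun_zero]
  ring

end RcircAux

open RcircAux

/-- Explicit inversion of the circle operator `R`. -/
theorem Rcirc_inv_explicit (N : ℕ) [NeZero N] (hN : 3 ≤ N) (u : ZMod N → ℝ)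
    (hu : ∀ k, 0 < u k) (hprod : (∏ k, u k) ≠ 1) :
    IsUnit (Rcirc N u).det ∧
    (∀ i j : ZMod N, j ≠ i → j ≠ i + 1 → j ≠ i - 1 →
      (Rcirc N u)⁻¹ i j =
        (cycProd N u i (j - 1) *
            (1 + cycSum N (fun k => cycProd N (fun l => u l ^ 2) k (i - 1)) (j + 1) (i - 1)) +
          cycProd N u j (i - 1) *
            (1 + cycSum N (fun k => cycProd N (fun l => u l ^ 2) k (j - 1)) (i + 1) (j - 1))) /
          ((∏ k, u k) - 1) ^ 2) ∧
    (∀ i : ZMod N,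
      (Rcirc N u)⁻¹ i (i + 1) =
        (u i * (1 + cycSum N (fun k => cycProd N (fun l => u l ^ 2) k (i - 1)) (i + 2) (i - 1)) +
          cycProd N u (i + 1) (i - 1)) / ((∏ k, u k) - 1) ^ 2) ∧
    (∀ i : ZMod N,
      (Rcirc N u)⁻¹ i (i - 1) =
        (u (i - 1) *
            (1 + cycSum N (fun k => cycProd N (fun l => u l ^ 2) k (i - 2)) (i + 1) (i - 2)) +
          cycProd N u i (i - 2)) / ((∏ k, u k) - 1) ^ 2) ∧
    (∀ i : ZMod N,
      (Rcirc N u)⁻¹ i i =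
        (1 + cycSum N (fun k => cycProd N (fun l => u l ^ 2) k (i - 1)) (i + 1) (i - 1)) /
          ((∏ k, u k) - 1) ^ 2) := by
  have hN0 : 0 < N := by omega
  have hRM := rightInv hN u hprod
  have hinv : (Rcirc N u)⁻¹ = ((((∏ k, u k) - 1) ^ 2)⁻¹) • (Smat1 u * Smat2 u) :=
    Matrix.inv_eq_right_inv hRM
  have hME : ∀ i j : ZMod N, (Rcirc N u)⁻¹ i j
      = ((((∏ k, u k) - 1) ^ 2)⁻¹) * (Smat1 u * Smat2 u) i j := by
    intro i j
    rw [hinv, Matrix.smul_apply, smul_eq_mul]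
  have hcast : ∀ t : ℕ, t ≤ N → ((N - t : ℕ) : ZMod N) = -(t : ZMod N) := by
    intro t ht
    push_cast [Nat.cast_sub ht]
    rw [ZMod.natCast_self]
    ring
  refine ⟨Matrix.isUnit_det_of_right_inverse hRM, ?_, ?_, ?_, ?_⟩
  · -- generic case
    intro i j hji hj1 hjm
    set d := (j - i).val with hd
    have hdlt : d < N := ZMod.val_lt _
    have hjd : j = i + (d : ZMod N) := by rw [hd, natCast_val]; ring
    have hd0 : d ≠ 0 := by
      intro h
      exact hji (by rw [hjd, h]; push_cast; ring)
    have hd1 : d ≠ 1 := by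
      intro h
      exact hj1 (by rw [hjd, h]; push_cast; ring)
    have hdm : d ≠ N - 1 := by
      intro h
      refine hjm ?_
      rw [hjd, h, hcast 1 (by omega)]
      push_cast
      ring
    have hd2 : 2 ≤ d := by omega
    have hdN2 : d ≤ N - 2 := by omega
    have h0 := SS_entry_split u i d hdlt
    rw [← hjd] at h0
    -- first keySum
    have hk1 := keySum u i (N - d - 1) (by omega) (by omega)
    have hs1 : i - ((N - d - 1 : ℕ) : ZMod N) = j + 1 := by
      rw [show N - d - 1 = N - (d + 1) by omega, hcast (d + 1) (by omega), hjd]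
      push_cast
      ring
    rw [hs1, show N - d - 1 + 1 = N - d by omega] at hk1
    -- second keySum
    have hk2 := keySum u j (d - 1) (by omega) (by omega)
    have hs2 : j - ((d - 1 : ℕ) : ZMod N) = i + 1 := by
      rw [hjd]
      push_cast [Nat.cast_sub (show 1 ≤ d by omega)]
      ring
    rw [hs2, show d - 1 + 1 = d by omega] at hk2
    -- cycProd identifications
    have hcp1 : cycProd N u i (j - 1) = wfun u i d := by
      rw [cycProd_eq]
      have : j - 1 - i = ((d - 1 : ℕ) : ZMod N) := by
        rw [hjd]
        push_cast [Nat.cast_sub (show 1 ≤ d by omega)]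
        ring
      rw [this, ZMod.val_cast_of_lt (by omega), show d - 1 + 1 = d by omega]
    have hcp2 : cycProd N u j (i - 1) = wfun u j (N - d) := by
      rw [cycProd_eq]
      have : i - 1 - j = -(((d + 1 : ℕ)) : ZMod N) := by
        rw [hjd]
        push_cast
        ring
      rw [this, val_neg_natCast (d + 1) (by omega) (by omega),
        show N - (d + 1) + 1 = N - d by omega]
    rw [hME i j, h0, ← hk1, ← hk2, ← hcp1, ← hcp2, inv_mul_eq_div]
  · -- j = i + 1
    intro i
    have h0 := SS_entry_split u i 1 (by omega)
    rw [Nat.cast_one] at h0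
    have hsum1 : (∑ n ∈ Finset.range 1, wfun u (i + 1 - (n : ZMod N)) n ^ 2) = 1 := by
      rw [Finset.sum_range_one, Nat.cast_zero, wfun_zero, one_pow]
    rw [hsum1, mul_one, wfun_one] at h0
    have hk := keySum u i (N - 2) (by omega) (by omega)
    have hs : i - ((N - 2 : ℕ) : ZMod N) = i + 2 := by
      rw [hcast 2 (by omega)]
      push_cast
      ring
    rw [hs, show N - 2 + 1 = N - 1 by omega] at hk
    have hcp : cycProd N u (i + 1) (i - 1) = wfun u (i + 1) (N - 1) := by
      rw [cycProd_eq]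
      have : i - 1 - (i + 1) = -(((2 : ℕ)) : ZMod N) := by push_cast; ring
      rw [this, val_neg_natCast 2 (by omega) (by omega), show N - 2 + 1 = N - 1 by omega]
    rw [hME i (i + 1), h0, ← hk, ← hcp, inv_mul_eq_div]
  · -- j = i - 1
    intro i
    have h0 := SS_entry_split u i (N - 1) (by omega)
    have hj2 : i + ((N - 1 : ℕ) : ZMod N) = i - 1 := by
      rw [hcast 1 (by omega)]
      push_cast
      ring
    rw [hj2, show N - (N - 1) = 1 by omega, wfun_one] at h0
    have hsum1 : (∑ m ∈ Finset.range 1, wfun u (i - (m : ZMod N)) m ^ 2) = 1 := by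
      rw [Finset.sum_range_one, Nat.cast_zero, wfun_zero, one_pow]
    rw [hsum1, mul_one] at h0
    have hk := keySum u (i - 1) (N - 2) (by omega) (by omega)
    have hs : i - 1 - ((N - 2 : ℕ) : ZMod N) = i + 1 := by
      rw [hcast 2 (by omega)]
      push_cast
      ring
    have ht : i - 1 - 1 = i - 2 := by ring
    rw [hs, ht, show N - 2 + 1 = N - 1 by omega] at hk
    have hcp : cycProd N u i (i - 2) = wfun u i (N - 1) := by
      rw [cycProd_eq]
      have : i - 2 - i = -(((2 : ℕ)) : ZMod N) := by push_cast; ring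
      rw [this, val_neg_natCast 2 (by omega) (by omega), show N - 2 + 1 = N - 1 by omega]
    rw [hME i (i - 1), h0, ← hk, ← hcp, inv_mul_eq_div]
    ring
  · -- diagonal
    intro i
    have h0 := SS_entry_split u i 0 (by omega)
    rw [Nat.cast_zero, add_zero, Nat.sub_zero, wfun_zero, one_mul, Finset.range_zero,
      Finset.sum_empty, mul_zero, add_zero] at h0
    have hk := keySum u i (N - 1) (by omega) (by omega)
    have hs : i - ((N - 1 : ℕ) : ZMod N) = i + 1 := by
      rw [hcast 1 (by omega)]
      push_cast
      ring
    rw [hs, show N - 1 + 1 = N by omega] at hk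
    rw [hME i i, h0, ← hk, inv_mul_eq_div]
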